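/- Let A be a nonzero real d×n matrix, b ∈ ℝ^d, P a real m×n matrix, f : ℝ → ℝ convex and three times differentiable, ε > 0, R > 0, w ∈ ℝ^m, and suppose there exists Δ with AΔ = b. Let σ_min(P) = inf{ ‖Pu‖₂ : u ∈ ℝ^n, ‖u‖₂ = 1 } and let ‖A‖ denote the ℓ₂ operator norm of A. Then Ψ(r) = inf{ ∑_{i=1}^m r_i (PΔ)_i² : AΔ = b } ≥ (ε·Φ(w)/(m R²)) · σ_min(P)² · ‖b‖₂² / ‖A‖². -/
import Mathlib


open scoped BigOperators

/-- A monotone function differentiable at a point has nonnegative derivative there. -/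
lemma monotone_deriv_nonneg' {g : ℝ → ℝ} (hg : Monotone g) {x : ℝ}
    (hd : DifferentiableAt ℝ g x) : 0 ≤ deriv g x := by
  have h : HasDerivWithinAt g (deriv g x) (Set.Ioi x) x :=
    hd.hasDerivAt.hasDerivWithinAt
  rw [hasDerivWithinAt_iff_tendsto_slope] at h
  have hset : Set.Ioi x \ {x} = Set.Ioi x := by
    apply Set.diff_singleton_eq_self
    simp
  rw [hset] at h
  refine ge_of_tendsto h ?_
  filter_upwards [self_mem_nhdsWithin] with y hy
  have hxy : x < y := hy
  rw [slope_def_field]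
  exact div_nonneg (sub_nonneg.mpr (hg hxy.le)) (sub_nonneg.mpr hxy.le)

/-- Lemma 2.4 (second inequality): lower bound on Ψ(r). -/
theorem psi_lower_bound
    (d n m : ℕ) (A : Matrix (Fin d) (Fin n) ℝ) (b : Fin d → ℝ)
    (P : Matrix (Fin m) (Fin n) ℝ) (f : ℝ → ℝ)
    (hconv : ConvexOn ℝ Set.univ f)
    (hf1 : Differentiable ℝ f) (hf2 : Differentiable ℝ (deriv f))
    (hf3 : Differentiable ℝ (deriv (deriv f)))
    (hA : A ≠ 0)
    (ε R : ℝ) (hε : 0 < ε) (hR : 0 < R)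
    (w r : Fin m → ℝ)
    (hr : ∀ i, r i = 1 / R ^ 2 *
      (deriv (deriv f) (w i) + ε * (∑ j, deriv (deriv f) (w j)) / m))
    (hfeas : ∃ Δ : Fin n → ℝ, A.mulVec Δ = b) :
    sInf {v : ℝ | ∃ Δ : Fin n → ℝ, A.mulVec Δ = b ∧
        v = ∑ i, r i * (P.mulVec Δ) i ^ 2} ≥
      (ε * (∑ j, deriv (deriv f) (w j)) / (m * R ^ 2)) *
        (sInf {v : ℝ | ∃ u : Fin n → ℝ,
            Real.sqrt (∑ j, u j ^ 2) = 1 ∧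
            v = Real.sqrt (∑ i, (P.mulVec u) i ^ 2)}) ^ 2 *
        (∑ i, b i ^ 2) /
        (sSup {v : ℝ | ∃ u : Fin n → ℝ,
            Real.sqrt (∑ j, u j ^ 2) = 1 ∧
            v = Real.sqrt (∑ i, (A.mulVec u) i ^ 2)}) ^ 2 := by
  -- second derivative is pointwise nonnegative
  have hmono : Monotone (deriv f) := by
    have h := hconv.monotoneOn_deriv (fun x _ => (hf1 x))
    exact fun a c hac => h (Set.mem_univ a) (Set.mem_univ c) hac
  have hpt : ∀ x : ℝ, 0 ≤ deriv (deriv f) x := fun x =>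
    monotone_deriv_nonneg' hmono (hf2 x)
  set Φ : ℝ := ∑ j, deriv (deriv f) (w j) with hΦdef
  have hΦ : 0 ≤ Φ := Finset.sum_nonneg fun j _ => hpt (w j)
  set c : ℝ := ε * Φ / (↑m * R ^ 2) with hcdef
  have hc0 : 0 ≤ c := div_nonneg (mul_nonneg hε.le hΦ) (by positivity)
  have hrc : ∀ i : Fin m, c ≤ r i := by
    intro i
    rw [hr i]
    have key : c = 1 / R ^ 2 * (ε * Φ / ↑m) := by
      rw [hcdef, one_div, ← div_div, div_eq_inv_mul (ε * Φ / ↑m)]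
    rw [key]
    apply mul_le_mul_of_nonneg_left _ (by positivity)
    exact le_add_of_nonneg_left (hpt (w i))
  set σ : ℝ := sInf {v : ℝ | ∃ u : Fin n → ℝ,
      Real.sqrt (∑ j, u j ^ 2) = 1 ∧
      v = Real.sqrt (∑ i, (P.mulVec u) i ^ 2)} with hσdef
  set S : ℝ := sSup {v : ℝ | ∃ u : Fin n → ℝ,
      Real.sqrt (∑ j, u j ^ 2) = 1 ∧
      v = Real.sqrt (∑ i, (A.mulVec u) i ^ 2)} with hSdef
  have hσ0 : 0 ≤ σ := by
    apply Real.sInf_nonneg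
    rintro v ⟨u, -, rfl⟩
    exact Real.sqrt_nonneg _
  -- the A-set is bounded above
  have hbddA : BddAbove {v : ℝ | ∃ u : Fin n → ℝ,
      Real.sqrt (∑ j, u j ^ 2) = 1 ∧
      v = Real.sqrt (∑ i, (A.mulVec u) i ^ 2)} := by
    refine ⟨Real.sqrt (∑ i, ∑ j, (A i j) ^ 2), ?_⟩
    rintro v ⟨u, hu, rfl⟩
    have hu2 : (∑ j, u j ^ 2) = 1 := by
      have := congrArg (fun x => x ^ 2) hu
      simpa [Real.sq_sqrt (Finset.sum_nonneg fun j _ => sq_nonneg (u j))] using this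
    apply Real.sqrt_le_sqrt
    have : ∀ i, (A.mulVec u) i ^ 2 ≤ ∑ j, (A i j) ^ 2 := by
      intro i
      have h := Finset.sum_mul_sq_le_sq_mul_sq Finset.univ (fun j => A i j) u
      simpa [Matrix.mulVec, dotProduct, hu2] using h
    exact Finset.sum_le_sum fun i _ => this i
  -- S is positive
  have hS : 0 < S := by
    have : ∃ i j, A i j ≠ 0 := by
      by_contra h
      push_neg at h
      exact hA (by ext i j; simpa using h i j)
    obtain ⟨i0, j0, hij⟩ := this
    set u : Fin n → ℝ := fun k => if k = j0 then 1 else 0 with hudef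
    have hu_norm : Real.sqrt (∑ j, u j ^ 2) = 1 := by
      have : (∑ j, u j ^ 2) = 1 := by
        simp [hudef, Finset.sum_ite_eq', apply_ite (· ^ 2 : ℝ → ℝ)]
      rw [this, Real.sqrt_one]
    have hmem : Real.sqrt (∑ i, (A.mulVec u) i ^ 2) ∈ {v : ℝ | ∃ u : Fin n → ℝ,
        Real.sqrt (∑ j, u j ^ 2) = 1 ∧
        v = Real.sqrt (∑ i, (A.mulVec u) i ^ 2)} := ⟨u, hu_norm, rfl⟩
    have hpos : 0 < Real.sqrt (∑ i, (A.mulVec u) i ^ 2) := by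
      apply Real.sqrt_pos.mpr
      apply Finset.sum_pos' (fun i _ => sq_nonneg _) ⟨i0, Finset.mem_univ i0, ?_⟩
      have : (A.mulVec u) i0 = A i0 j0 := by
        simp [hudef, Matrix.mulVec, dotProduct, Finset.sum_ite_eq', mul_ite]
      rw [this]
      exact lt_of_le_of_ne (sq_nonneg _) (Ne.symm (pow_ne_zero 2 hij))
    exact hpos.trans_le (le_csSup hbddA hmem)
  -- main bound
  rw [ge_iff_le]
  apply le_csInf
  · obtain ⟨Δ0, h0⟩ := hfeas
    exact ⟨∑ i, r i * (P.mulVec Δ0) i ^ 2, Δ0, h0, rfl⟩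
  rintro v ⟨Δ, hΔ, rfl⟩
  have hsum : c * ∑ i, (P.mulVec Δ) i ^ 2 ≤ ∑ i, r i * (P.mulVec Δ) i ^ 2 := by
    rw [Finset.mul_sum]
    exact Finset.sum_le_sum fun i _ =>
      mul_le_mul_of_nonneg_right (hrc i) (sq_nonneg _)
  have hmain : σ ^ 2 * (∑ i, b i ^ 2) / S ^ 2 ≤ ∑ i, (P.mulVec Δ) i ^ 2 := by
    by_cases hΔ0 : Δ = 0
    · have hb : b = 0 := by rw [← hΔ, hΔ0, Matrix.mulVec_zero]
      have : (∑ i, b i ^ 2) = 0 := by simp [hb]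
      rw [this]
      simpa using Finset.sum_nonneg fun i _ => sq_nonneg ((P.mulVec Δ) i)
    · obtain ⟨j1, hj1⟩ := Function.ne_iff.mp hΔ0
      have hj1' : Δ j1 ≠ 0 := by simpa using hj1
      have ht2 : 0 < ∑ j, Δ j ^ 2 :=
        Finset.sum_pos' (fun j _ => sq_nonneg _)
          ⟨j1, Finset.mem_univ j1,
            lt_of_le_of_ne (sq_nonneg _) (Ne.symm (pow_ne_zero 2 hj1'))⟩
      set t : ℝ := Real.sqrt (∑ j, Δ j ^ 2) with htdef
      have ht : 0 < t := Real.sqrt_pos.mpr ht2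
      have ht2' : t ^ 2 = ∑ j, Δ j ^ 2 := Real.sq_sqrt ht2.le
      set u : Fin n → ℝ := t⁻¹ • Δ with hudef
      have hu_norm : Real.sqrt (∑ j, u j ^ 2) = 1 := by
        have : (∑ j, u j ^ 2) = 1 := by
          have : (∑ j, u j ^ 2) = t⁻¹ ^ 2 * ∑ j, Δ j ^ 2 := by
            rw [Finset.mul_sum]
            exact Finset.sum_congr rfl fun j _ => by
              simp [hudef, mul_pow]
          rw [this, ← ht2', inv_pow, inv_mul_cancel₀ (pow_ne_zero 2 ht.ne')]
        rw [this, Real.sqrt_one]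
      have hPu : ∀ i, (P.mulVec u) i = t⁻¹ * (P.mulVec Δ) i := by
        intro i
        rw [hudef, Matrix.mulVec_smul]
        rfl
      have hAu : ∀ i, (A.mulVec u) i = t⁻¹ * b i := by
        intro i
        rw [hudef, Matrix.mulVec_smul, hΔ]
        rfl
      have hPsum : (∑ i, (P.mulVec u) i ^ 2) = t⁻¹ ^ 2 * ∑ i, (P.mulVec Δ) i ^ 2 := by
        rw [Finset.mul_sum]
        exact Finset.sum_congr rfl fun i _ => by rw [hPu i, mul_pow]
      have hAsum : (∑ i, (A.mulVec u) i ^ 2) = t⁻¹ ^ 2 * ∑ i, b i ^ 2 := by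
        rw [Finset.mul_sum]
        exact Finset.sum_congr rfl fun i _ => by rw [hAu i, mul_pow]
      -- σ ≤ ‖Pu‖
      have hσle : σ ≤ Real.sqrt (∑ i, (P.mulVec u) i ^ 2) := by
        apply csInf_le
        · exact ⟨0, by rintro v ⟨u', -, rfl⟩; exact Real.sqrt_nonneg _⟩
        · exact ⟨u, hu_norm, rfl⟩
      have hσ2 : σ ^ 2 ≤ t⁻¹ ^ 2 * ∑ i, (P.mulVec Δ) i ^ 2 := by
        calc σ ^ 2 ≤ Real.sqrt (∑ i, (P.mulVec u) i ^ 2) ^ 2 :=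
              pow_le_pow_left₀ hσ0 hσle 2
          _ = ∑ i, (P.mulVec u) i ^ 2 :=
              Real.sq_sqrt (Finset.sum_nonneg fun i _ => sq_nonneg _)
          _ = t⁻¹ ^ 2 * ∑ i, (P.mulVec Δ) i ^ 2 := hPsum
      -- ‖Au‖ ≤ S
      have hSle : Real.sqrt (∑ i, (A.mulVec u) i ^ 2) ≤ S :=
        le_csSup hbddA ⟨u, hu_norm, rfl⟩
      have hS2 : t⁻¹ ^ 2 * ∑ i, b i ^ 2 ≤ S ^ 2 := by
        calc t⁻¹ ^ 2 * ∑ i, b i ^ 2 = ∑ i, (A.mulVec u) i ^ 2 := hAsum.symm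
          _ = Real.sqrt (∑ i, (A.mulVec u) i ^ 2) ^ 2 :=
              (Real.sq_sqrt (Finset.sum_nonneg fun i _ => sq_nonneg _)).symm
          _ ≤ S ^ 2 := pow_le_pow_left₀ (Real.sqrt_nonneg _) hSle 2
      -- combine
      have h1 : σ ^ 2 * t ^ 2 ≤ ∑ i, (P.mulVec Δ) i ^ 2 := by
        have := mul_le_mul_of_nonneg_right hσ2 (sq_nonneg t)
        calc σ ^ 2 * t ^ 2 ≤ t⁻¹ ^ 2 * (∑ i, (P.mulVec Δ) i ^ 2) * t ^ 2 := this
          _ = (t⁻¹ * t) ^ 2 * ∑ i, (P.mulVec Δ) i ^ 2 := by ring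
          _ = ∑ i, (P.mulVec Δ) i ^ 2 := by
              rw [inv_mul_cancel₀ ht.ne', one_pow, one_mul]
      have h2 : (∑ i, b i ^ 2) ≤ S ^ 2 * t ^ 2 := by
        have := mul_le_mul_of_nonneg_right hS2 (sq_nonneg t)
        calc (∑ i, b i ^ 2) = (t⁻¹ * t) ^ 2 * ∑ i, b i ^ 2 := by
              rw [inv_mul_cancel₀ ht.ne', one_pow, one_mul]
          _ = t⁻¹ ^ 2 * (∑ i, b i ^ 2) * t ^ 2 := by ring
          _ ≤ S ^ 2 * t ^ 2 := this
      rw [div_le_iff₀ (by positivity : (0:ℝ) < S ^ 2)]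
      nlinarith [mul_le_mul_of_nonneg_left h2 (sq_nonneg σ),
        mul_le_mul_of_nonneg_left h1 (sq_nonneg S)]
  calc c * σ ^ 2 * (∑ i, b i ^ 2) / S ^ 2
      = c * (σ ^ 2 * (∑ i, b i ^ 2) / S ^ 2) := by ring
    _ ≤ c * ∑ i, (P.mulVec Δ) i ^ 2 := mul_le_mul_of_nonneg_left hmain hc0
    _ ≤ ∑ i, r i * (P.mulVec Δ) i ^ 2 := hsum
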